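/- Let H be a complex Hilbert space, let V : ℝ → (H →L[ℂ] H) be continuous with (V t)† = −(V t) (skew-adjoint) for every t, let a ≤ b be reals, and let g : ℝ → (H →L[ℂ] H) satisfy HasDerivAt g ((V t).comp (g t)) t for every t ∈ [a, b], with g(a) = 1. Then for all s, t with a ≤ s ≤ t ≤ b, ‖g(t) − g(s)‖ ≤ ∫ₛᵗ ‖V(σ)‖ dσ in the operator norm. (This is the estimate of equations (sth19'')–(sth20'') in Lemma 9.7, which shows the gauge functions g_ε are uniformly Cauchy as ε ↓ 0 when ∫₀^T ‖d^*C(σ)‖_∞ dσ < ∞.) -/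

import Mathlib

/-- The estimate (sth19'')–(sth20'') of Lemma 9.7: for a solution of
`g′(t) = V(t) ∘ g(t)` with skew-adjoint `V` and `g(a) = 1`,
`‖g(t) − g(s)‖ ≤ ∫ₛᵗ ‖V(σ)‖ dσ` in operator norm for `a ≤ s ≤ t ≤ b`. -/
theorem stmt_18 {H : Type*} [NormedAddCommGroup H] [InnerProductSpace ℂ H]
    [CompleteSpace H] (V : ℝ → H →L[ℂ] H) (hV : Continuous V)
    (hskew : ∀ t : ℝ, ContinuousLinearMap.adjoint (V t) = -(V t))
    (a b : ℝ) (hab : a ≤ b) (g : ℝ → H →L[ℂ] H)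
    (hg : ∀ t ∈ Set.Icc a b, HasDerivAt g ((V t).comp (g t)) t)
    (hga : g a = 1) :
    ∀ s t : ℝ, a ≤ s → s ≤ t → t ≤ b →
      ‖g t - g s‖ ≤ ∫ σ in s..t, ‖V σ‖ := by
  have hgcont : ContinuousOn g (Set.Icc a b) := fun x hx =>
    (hg x hx).continuousAt.continuousWithinAt
  -- norm preservation: ‖g σ x‖ = ‖x‖ on [a,b]
  have hnorm : ∀ σ ∈ Set.Icc a b, ∀ x : H, ‖g σ x‖ = ‖x‖ := by
    intro σ hσ x
    set f : ℝ → ℂ := fun τ => inner ℂ (g τ x) (g τ x) with hf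
    have hderiv : ∀ τ ∈ Set.Icc a b, HasDerivAt f 0 τ := by
      intro τ hτ
      have h1 : HasDerivAt (fun τ => g τ x) ((V τ).comp (g τ) x) τ :=
        (((ContinuousLinearMap.apply ℂ H x).restrictScalars
          ℝ).hasFDerivAt).comp_hasDerivAt τ (hg τ hτ)
      have h2 := h1.inner ℂ h1
      have hz : (inner ℂ (g τ x) ((V τ).comp (g τ) x)
          + inner ℂ ((V τ).comp (g τ) x) (g τ x) : ℂ) = 0 := by
        set z := g τ x
        have hA : (inner ℂ ((V τ) z) z : ℂ) = - inner ℂ z ((V τ) z) := by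
          have := ContinuousLinearMap.adjoint_inner_left (V τ) z z
          rw [hskew τ] at this
          simp only [ContinuousLinearMap.neg_apply, inner_neg_left] at this
          linear_combination -this
        simp only [ContinuousLinearMap.comp_apply]
        rw [hA]; ring
      rw [hz] at h2
      exact h2
    have hsub : Set.uIcc a σ ⊆ Set.Icc a b := by
      rw [Set.uIcc_of_le hσ.1]
      exact Set.Icc_subset_Icc le_rfl hσ.2
    have heq := intervalIntegral.integral_eq_sub_of_hasDerivAt
      (fun τ hτ => hderiv τ (hsub hτ))
      (intervalIntegrable_const (c := (0 : ℂ)))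
    simp only [intervalIntegral.integral_zero] at heq
    have hfa : f σ = f a := by linear_combination -heq
    have : (inner ℂ (g σ x) (g σ x) : ℂ) = inner ℂ x x := by
      rw [hf] at hfa; simpa [hga] using hfa
    have h3 : ‖g σ x‖ ^ 2 = ‖x‖ ^ 2 := by
      rw [inner_self_eq_norm_sq_to_K, inner_self_eq_norm_sq_to_K] at this
      exact_mod_cast this
    nlinarith [norm_nonneg (g σ x), norm_nonneg x]
  have hgle : ∀ σ ∈ Set.Icc a b, ‖g σ‖ ≤ 1 := by
    intro σ hσ
    refine (g σ).opNorm_le_bound zero_le_one fun x => ?_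
    rw [hnorm σ hσ x, one_mul]
  intro s t hs hst htb
  have hsub : Set.uIcc s t ⊆ Set.Icc a b := by
    rw [Set.uIcc_of_le hst]
    exact Set.Icc_subset_Icc hs htb
  have hcont : ContinuousOn (fun σ => (V σ).comp (g σ)) (Set.uIcc s t) := by
    exact (hV.continuousOn.clm_comp (hgcont.mono hsub))
  have hint : IntervalIntegrable (fun σ => (V σ).comp (g σ)) MeasureTheory.volume s t :=
    hcont.intervalIntegrable
  have heq := intervalIntegral.integral_eq_sub_of_hasDerivAt
    (fun σ hσ => hg σ (hsub hσ)) hint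
  rw [← heq]
  have hVint : IntervalIntegrable (fun σ => ‖V σ‖) MeasureTheory.volume s t :=
    (hV.norm.continuousOn).intervalIntegrable
  calc ‖∫ σ in s..t, (V σ).comp (g σ)‖
      ≤ ∫ σ in s..t, ‖(V σ).comp (g σ)‖ :=
        intervalIntegral.norm_integral_le_integral_norm hst
    _ ≤ ∫ σ in s..t, ‖V σ‖ := by
        apply intervalIntegral.integral_mono_on hst (hint.norm) hVint
        intro σ hσ
        calc ‖(V σ).comp (g σ)‖ ≤ ‖V σ‖ * ‖g σ‖ := (V σ).opNorm_comp_le _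
          _ ≤ ‖V σ‖ * 1 := by
              have := hgle σ (hsub (by rw [Set.uIcc_of_le hst]; exact hσ))
              exact mul_le_mul_of_nonneg_left this (norm_nonneg _)
          _ = ‖V σ‖ := mul_one _
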